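/- Let f : (0, ∞) → ℂ be a function of the form f(t) = Σ_{n≥1} a(n) e^{−2πnt/√N} + Σ_{n≥1} b(n) e^{2πnt/√N} Γ(1−k, 4πnt/√N), where a(n), b(n) = O(n^μ). Then for Re(s) > μ + 1, ∫₀^∞ f(t) t^{s−1} dt = (√N/2π)^s (Γ(s) Σ a(n) n^{−s} + W_{1−k}(s) Σ b(n) n^{−s}). -/

import Mathlib

open MeasureTheory Real Set Filter Asymptotics

/-- Upper incomplete Gamma function `Γ(ν, x) = ∫_x^∞ t^(ν-1) e^(-t) dt`. -/
noncomputable def Ginc (ν x : ℝ) : ℝ := ∫ t in Set.Ioi x, t ^ (ν - 1) * Real.exp (-t)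

/-- `W_ν(s) = ∫₀^∞ Γ(ν, 2x) e^x x^(s-1) dx`. -/
noncomputable def W (ν : ℝ) (s : ℂ) : ℂ :=
  ∫ x in Set.Ioi (0:ℝ), (Ginc ν (2*x) : ℂ) * (Real.exp x : ℂ) * (x:ℂ) ^ (s - 1)

/-- integrability of `t^(a-1) e^{-(c t)}` on `Ioi 0`. -/
lemma aux_integrable {a c : ℝ} (ha : 0 < a) (hc : 0 < c) :
    IntegrableOn (fun t : ℝ => t ^ (a - 1) * Real.exp (-(c * t))) (Set.Ioi 0) := by
  have h0 : IntegrableOn (fun x : ℝ => Real.exp (-x) * x ^ (a - 1)) (Set.Ioi 0) :=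
    Real.GammaIntegral_convergent ha
  have h1 : IntegrableOn (fun x : ℝ => Real.exp (-(c * x)) * (c * x) ^ (a - 1)) (Set.Ioi 0) := by
    have := (MeasureTheory.integrableOn_Ioi_comp_mul_left_iff
      (fun x : ℝ => Real.exp (-x) * x ^ (a - 1)) 0 hc).mpr (by simpa using h0)
    simpa using this
  have h2 := h1.const_mul (c ^ (a - 1))⁻¹
  refine IntegrableOn.congr_fun h2 (fun t ht => ?_) measurableSet_Ioi
  rw [Set.mem_Ioi] at ht
  rw [Real.mul_rpow hc.le ht.le]
  field_simp [(Real.rpow_pos_of_pos hc _).ne']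

lemma aux_integrableOn_Ioi {a c : ℝ} (ha : 0 < a) (hc : 0 < c) {y : ℝ} (hy : 0 ≤ y) :
    IntegrableOn (fun t : ℝ => t ^ (a - 1) * Real.exp (-(c * t))) (Set.Ioi y) :=
  (aux_integrable ha hc).mono_set (Set.Ioi_subset_Ioi hy)

lemma Ginc_nonneg {ν y : ℝ} (hy : 0 ≤ y) : 0 ≤ Ginc ν y := by
  refine setIntegral_nonneg measurableSet_Ioi (fun t ht => ?_)
  have ht' : 0 < t := lt_of_le_of_lt hy ht
  positivity

lemma Ginc_anti {ν : ℝ} (hν : 0 < ν) {y₁ y₂ : ℝ} (h0 : 0 ≤ y₁) (h12 : y₁ ≤ y₂) :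
    Ginc ν y₂ ≤ Ginc ν y₁ := by
  have hint : IntegrableOn (fun t : ℝ => t ^ (ν - 1) * Real.exp (-t)) (Set.Ioi y₁) := by
    simpa [one_mul] using aux_integrableOn_Ioi hν one_pos h0
  refine setIntegral_mono_set hint ?_ (HasSubset.Subset.eventuallyLE (Set.Ioi_subset_Ioi h12))
  filter_upwards [ae_restrict_mem measurableSet_Ioi] with t ht
  have ht' : 0 < t := lt_of_le_of_lt h0 ht
  positivity

/-- The key decay bound: `Ginc ν y ≤ exp(-(3/4) y) * K` with `K = ∫_{0}^∞ t^{ν-1} e^{-t/4}`. -/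
lemma Ginc_le {ν : ℝ} (hν : 0 < ν) {y : ℝ} (hy : 0 ≤ y) :
    Ginc ν y ≤ Real.exp (-(3/4 * y)) * ∫ t in Set.Ioi (0:ℝ), t ^ (ν - 1) * Real.exp (-(4⁻¹ * t)) := by
  have hint1 : IntegrableOn (fun t : ℝ => t ^ (ν - 1) * Real.exp (-t)) (Set.Ioi y) := by
    simpa [one_mul] using aux_integrableOn_Ioi hν one_pos hy
  have hint4 : IntegrableOn (fun t : ℝ => t ^ (ν - 1) * Real.exp (-(4⁻¹ * t))) (Set.Ioi y) :=
    aux_integrableOn_Ioi hν (by norm_num) hy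
  have step1 : Ginc ν y ≤
      ∫ t in Set.Ioi y, Real.exp (-(3/4 * y)) * (t ^ (ν - 1) * Real.exp (-(4⁻¹ * t))) := by
    refine setIntegral_mono_on hint1 (hint4.const_mul _) measurableSet_Ioi (fun t ht => ?_)
    rw [Set.mem_Ioi] at ht
    have h1 : Real.exp (-t) ≤ Real.exp (-(3/4 * y)) * Real.exp (-(4⁻¹ * t)) := by
      rw [← Real.exp_add]
      apply Real.exp_le_exp.mpr
      linarith
    have h2 : (0:ℝ) ≤ t ^ (ν - 1) := Real.rpow_nonneg (le_of_lt (lt_of_le_of_lt hy ht)) _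
    calc t ^ (ν - 1) * Real.exp (-t) ≤ t ^ (ν - 1) * (Real.exp (-(3/4 * y)) * Real.exp (-(4⁻¹ * t))) :=
          mul_le_mul_of_nonneg_left h1 h2
      _ = Real.exp (-(3/4 * y)) * (t ^ (ν - 1) * Real.exp (-(4⁻¹ * t))) := by ring
  rw [integral_const_mul] at step1
  refine step1.trans (mul_le_mul_of_nonneg_left ?_ (Real.exp_nonneg _))
  refine setIntegral_mono_set (aux_integrable hν (by norm_num)) ?_
    (HasSubset.Subset.eventuallyLE (Set.Ioi_subset_Ioi hy))
  filter_upwards [ae_restrict_mem measurableSet_Ioi] with t ht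
  have ht' : 0 < t := ht
  positivity

lemma Ginc_max_measurable {ν : ℝ} (hν : 0 < ν) :
    Measurable (fun x : ℝ => Ginc ν (max x 0)) := by
  have : Antitone (fun x : ℝ => Ginc ν (max x 0)) := by
    intro x₁ x₂ h
    exact Ginc_anti hν (le_max_right x₁ 0) (max_le_max h le_rfl)
  exact this.measurable

/-- bound on coefficients from big-O hypothesis -/
lemma coeff_bound {μ : ℝ} (hμ : 0 ≤ μ) {a : ℕ → ℂ}
    (ha : (fun n : ℕ => a n) =O[atTop] fun n : ℕ => (n:ℝ) ^ μ) :
    ∃ C : ℝ, 0 ≤ C ∧ ∀ n : ℕ, ‖a (n+1)‖ ≤ C * ((n:ℝ)+1) ^ μ := by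
  rw [isBigO_iff] at ha
  obtain ⟨C, hC⟩ := ha
  rw [eventually_atTop] at hC
  obtain ⟨n0, hn0⟩ := hC
  set D : ℝ := max C 0 + ∑ i ∈ Finset.range (n0+1), ‖a i‖ with hD
  have hsum_nonneg : (0:ℝ) ≤ ∑ i ∈ Finset.range (n0+1), ‖a i‖ :=
    Finset.sum_nonneg fun i _ => norm_nonneg _
  have hD0 : 0 ≤ D := add_nonneg (le_max_right _ _) hsum_nonneg
  refine ⟨D, hD0, fun n => ?_⟩
  have hpow1 : (1:ℝ) ≤ ((n:ℝ)+1) ^ μ :=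
    Real.one_le_rpow (by exact_mod_cast Nat.one_le_iff_ne_zero.mpr (Nat.succ_ne_zero n)) hμ
  have hpow0 : (0:ℝ) ≤ ((n:ℝ)+1) ^ μ := le_trans zero_le_one hpow1
  rcases le_or_gt n0 (n+1) with h | h
  · have := hn0 (n+1) h
    have hcast : ((n+1 : ℕ) : ℝ) = (n:ℝ) + 1 := by push_cast; ring
    rw [hcast] at this
    have hnorm : ‖((n:ℝ)+1) ^ μ‖ = ((n:ℝ)+1) ^ μ := Real.norm_of_nonneg hpow0
    rw [hnorm] at this
    refine this.trans (mul_le_mul_of_nonneg_right ?_ hpow0)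
    calc C ≤ max C 0 := le_max_left _ _
      _ ≤ D := le_add_of_nonneg_right hsum_nonneg
  · have hmem : n+1 ∈ Finset.range (n0+1) := Finset.mem_range.mpr (by omega)
    have h1 : ‖a (n+1)‖ ≤ ∑ i ∈ Finset.range (n0+1), ‖a i‖ :=
      Finset.single_le_sum (fun i _ => norm_nonneg (a i)) hmem
    have h2 : ∑ i ∈ Finset.range (n0+1), ‖a i‖ ≤ D := le_add_of_nonneg_left (le_max_right _ _)
    calc ‖a (n+1)‖ ≤ D := h1.trans h2
      _ ≤ D * (((n:ℝ)+1) ^ μ) := le_mul_of_one_le_right hD0 hpow1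

/-- summability of `(n+1)^μ r^(n+1)` for `0 ≤ r < 1`. -/
lemma aux_summable_geom {μ : ℝ} (hμ : 0 ≤ μ) {r : ℝ} (h0 : 0 ≤ r) (h1 : r < 1) :
    Summable (fun n : ℕ => ((n:ℝ)+1) ^ μ * r ^ (n+1)) := by
  set m : ℕ := ⌈μ⌉₊ with hm
  have hsum : Summable (fun n : ℕ => ((n:ℝ)+1) ^ m * r ^ (n+1)) := by
    have h := summable_pow_mul_geometric_of_norm_lt_one (R := ℝ) m
      (by rwa [Real.norm_eq_abs, abs_of_nonneg h0])
    have := h.comp_injective (add_left_injective 1)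
    refine this.congr fun n => ?_
    simp [Function.comp]
  refine Summable.of_nonneg_of_le (fun n => ?_) (fun n => ?_) hsum
  · positivity
  · refine mul_le_mul_of_nonneg_right ?_ (by positivity)
    rw [← Real.rpow_natCast ((n:ℝ)+1) m]
    exact Real.rpow_le_rpow_of_exponent_le (by linarith [Nat.cast_nonneg (α := ℝ) n]) (Nat.le_ceil μ)

/-- summability of `(n+1)^p` for `p < -1`. -/
lemma aux_summable_rpow {p : ℝ} (hp : p < -1) :
    Summable (fun n : ℕ => ((n:ℝ)+1) ^ p) := by
  have h := (Real.summable_nat_rpow (p := p)).mpr hp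
  have := h.comp_injective (add_left_injective 1)
  refine this.congr fun n => ?_
  simp [Function.comp]

/-- Mellin transform of a decaying exponential (value). -/
lemma mellin_exp {c : ℝ} (hc : 0 < c) {s : ℂ} (hs : 0 < s.re) :
    ∫ t in Set.Ioi (0:ℝ), (Real.exp (-(c * t)) : ℂ) * (t:ℂ) ^ (s - 1)
      = ((1 / c : ℝ) : ℂ) ^ s * Complex.Gamma s := by
  have h := Complex.integral_cpow_mul_exp_neg_mul_Ioi hs hc
  rw [show ((1/c : ℝ) : ℂ) = (1 / (c:ℂ)) by push_cast; ring, ← h]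
  refine setIntegral_congr_fun measurableSet_Ioi (fun t ht => ?_)
  rw [mul_comm]
  congr 1
  rw [Complex.ofReal_exp]
  push_cast
  ring_nf

/-- Mellin transform of the `Ginc` term (value), by substitution `x = c t`. -/
lemma mellin_Ginc {ν : ℝ} {c : ℝ} (hc : 0 < c) {s : ℂ} :
    ∫ t in Set.Ioi (0:ℝ), (Ginc ν (2 * (c * t)) : ℂ) * (Real.exp (c * t) : ℂ) * (t:ℂ) ^ (s - 1)
      = ((1 / c : ℝ) : ℂ) ^ s * W ν s := by
  have hc0 : ((1/c : ℝ) : ℂ) ≠ 0 := by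
    simp only [ne_eq, Complex.ofReal_eq_zero]
    positivity
  have key : ∀ t ∈ Set.Ioi (0:ℝ),
      (Ginc ν (2 * (c * t)) : ℂ) * (Real.exp (c * t) : ℂ) * (t:ℂ) ^ (s - 1)
        = ((1 / c : ℝ) : ℂ) ^ (s - 1) *
          ((Ginc ν (2 * (c * t)) : ℂ) * (Real.exp (c * t) : ℂ) * ((c * t : ℝ):ℂ) ^ (s - 1)) := by
    intro t ht
    rw [Set.mem_Ioi] at ht
    rw [Complex.ofReal_mul, Complex.mul_cpow_ofReal_nonneg hc.le ht.le]
    rw [show ((1 / c : ℝ) : ℂ) ^ (s-1) * ((Ginc ν (2 * (c * t)) : ℂ) * (Real.exp (c * t) : ℂ) *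
        ((c:ℂ) ^ (s-1) * (t:ℂ) ^ (s-1)))
      = (((1 / c : ℝ) : ℂ) ^ (s-1) * ((c:ℝ):ℂ) ^ (s-1)) *
        ((Ginc ν (2 * (c * t)) : ℂ) * (Real.exp (c * t) : ℂ) * (t:ℂ) ^ (s-1)) by ring]
    rw [← Complex.mul_cpow_ofReal_nonneg (by positivity) hc.le,
      show ((1/c:ℝ):ℂ) * ((c:ℝ):ℂ) = (((1/c) * c : ℝ):ℂ) by push_cast; ring,
      show (1/c * c : ℝ) = 1 by field_simp, Complex.ofReal_one, Complex.one_cpow, one_mul]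
  rw [setIntegral_congr_fun measurableSet_Ioi key, integral_const_mul]
  have subst := MeasureTheory.integral_comp_mul_left_Ioi
    (fun x : ℝ => (Ginc ν (2*x) : ℂ) * (Real.exp x : ℂ) * (x:ℂ) ^ (s - 1)) 0 hc
  rw [mul_zero] at subst
  rw [show (fun t : ℝ => (Ginc ν (2 * (c * t)) : ℂ) * (Real.exp (c * t) : ℂ) * ((c * t : ℝ):ℂ) ^ (s - 1))
    = (fun t : ℝ => (fun x : ℝ => (Ginc ν (2*x) : ℂ) * (Real.exp x : ℂ) * (x:ℂ) ^ (s - 1)) (c * t)) by rfl]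
  rw [subst, ← W, Complex.real_smul,
    show ((c⁻¹:ℝ):ℂ) = ((1/c:ℝ):ℂ) by push_cast; ring, ← mul_assoc]
  congr 1
  nth_rewrite 2 [show ((1/c:ℝ):ℂ) = ((1/c:ℝ):ℂ) ^ (1:ℂ) by rw [Complex.cpow_one]]
  rw [← Complex.cpow_add _ _ hc0, sub_add_cancel]

lemma cpow_aesm (s : ℂ) :
    AEStronglyMeasurable (fun t : ℝ => (t:ℂ) ^ (s-1)) (volume.restrict (Set.Ioi 0)) := by
  refine (ContinuousOn.aestronglyMeasurable ?_ measurableSet_Ioi)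
  intro t ht
  exact (Complex.continuousAt_ofReal_cpow_const t (s-1) (Or.inr (ne_of_gt ht))).continuousWithinAt

lemma norm_cpow {s : ℂ} {t : ℝ} (ht : 0 < t) : ‖(t:ℂ) ^ (s-1)‖ = t ^ (s.re - 1) := by
  rw [Complex.norm_cpow_eq_rpow_re_of_pos ht, Complex.sub_re, Complex.one_re]

lemma Fa_integrable {c : ℝ} (hc : 0 < c) {s : ℂ} (hs : 0 < s.re) :
    IntegrableOn (fun t : ℝ => (Real.exp (-(c * t)) : ℂ) * (t:ℂ) ^ (s - 1)) (Set.Ioi 0) := by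
  refine Integrable.mono' ((aux_integrable hs hc)) ?_ ?_
  · exact ((Complex.continuous_ofReal.comp (Real.continuous_exp.comp
      (continuous_const.mul continuous_id).neg)).aestronglyMeasurable).mul (cpow_aesm s)
  · filter_upwards [ae_restrict_mem measurableSet_Ioi] with t ht
    rw [norm_mul, Complex.norm_real, Real.norm_eq_abs, Real.abs_exp, norm_cpow ht]
    rw [mul_comm]

lemma Fa_norm_integral {c : ℝ} (hc : 0 < c) {s : ℂ} (hs : 0 < s.re) :
    ∫ t in Set.Ioi (0:ℝ), ‖(Real.exp (-(c * t)) : ℂ) * (t:ℂ) ^ (s - 1)‖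
      = (1/c) ^ s.re * Real.Gamma s.re := by
  rw [← Real.integral_rpow_mul_exp_neg_mul_Ioi hs hc]
  refine setIntegral_congr_fun measurableSet_Ioi (fun t ht => ?_)
  rw [norm_mul, Complex.norm_real, Real.norm_eq_abs, Real.abs_exp, norm_cpow ht, mul_comm]

section Fb
variable {ν c : ℝ} {s : ℂ}

lemma Fb_aesm (hν : 0 < ν) (hc : 0 < c) :
    AEStronglyMeasurable
      (fun t : ℝ => (Ginc ν (2 * (c * t)) : ℂ) * (Real.exp (c * t) : ℂ) * (t:ℂ) ^ (s - 1))
      (volume.restrict (Set.Ioi 0)) := by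
  have hmeas : AEStronglyMeasurable (fun t : ℝ => (Ginc ν (2 * (c * t)) : ℂ))
      (volume.restrict (Set.Ioi 0)) := by
    have h1 : Measurable (fun t : ℝ => (Ginc ν (max (2 * (c * t)) 0) : ℂ)) :=
      Complex.measurable_ofReal.comp ((Ginc_max_measurable hν).comp
        (measurable_const.mul (measurable_const.mul measurable_id)))
    refine h1.aestronglyMeasurable.congr ?_
    filter_upwards [ae_restrict_mem measurableSet_Ioi] with t ht
    have ht' : (0:ℝ) < t := ht
    have : (0:ℝ) ≤ 2 * (c * t) := by positivity
    rw [max_eq_left this]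
  exact (hmeas.mul ((Complex.continuous_ofReal.comp (Real.continuous_exp.comp
    (continuous_const.mul continuous_id))).aestronglyMeasurable)).mul (cpow_aesm s)

lemma Fb_norm_le (hν : 0 < ν) (hc : 0 < c) {t : ℝ} (ht : 0 < t) :
    ‖(Ginc ν (2 * (c * t)) : ℂ) * (Real.exp (c * t) : ℂ) * (t:ℂ) ^ (s - 1)‖
      ≤ (∫ u in Set.Ioi (0:ℝ), u ^ (ν - 1) * Real.exp (-(4⁻¹ * u))) *
          (t ^ (s.re - 1) * Real.exp (-(c/2 * t))) := by
  have h2ct : (0:ℝ) ≤ 2 * (c * t) := by positivity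
  have hK : (0:ℝ) ≤ ∫ u in Set.Ioi (0:ℝ), u ^ (ν - 1) * Real.exp (-(4⁻¹ * u)) := by
    refine setIntegral_nonneg measurableSet_Ioi (fun u hu => ?_)
    have : (0:ℝ) < u := hu
    positivity
  simp only [norm_mul, Complex.norm_real, Real.norm_eq_abs]
  rw [Real.abs_exp, abs_of_nonneg (Ginc_nonneg h2ct), norm_cpow ht]
  have h1 := Ginc_le hν h2ct
  calc Ginc ν (2 * (c * t)) * Real.exp (c * t) * t ^ (s.re - 1)
      ≤ (Real.exp (-(3/4 * (2 * (c * t)))) *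
          (∫ u in Set.Ioi (0:ℝ), u ^ (ν - 1) * Real.exp (-(4⁻¹ * u)))) *
          Real.exp (c * t) * t ^ (s.re - 1) := by
        refine mul_le_mul_of_nonneg_right (mul_le_mul_of_nonneg_right h1 (Real.exp_nonneg _))
          (Real.rpow_nonneg ht.le _)
    _ = (∫ u in Set.Ioi (0:ℝ), u ^ (ν - 1) * Real.exp (-(4⁻¹ * u))) *
          (t ^ (s.re - 1) * (Real.exp (-(3/4 * (2 * (c * t)))) * Real.exp (c * t))) := by ring
    _ = (∫ u in Set.Ioi (0:ℝ), u ^ (ν - 1) * Real.exp (-(4⁻¹ * u))) *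
          (t ^ (s.re - 1) * Real.exp (-(c/2 * t))) := by
        rw [← Real.exp_add]
        congr 2
        ring

lemma Fb_integrable (hν : 0 < ν) (hc : 0 < c) (hs : 0 < s.re) :
    IntegrableOn
      (fun t : ℝ => (Ginc ν (2 * (c * t)) : ℂ) * (Real.exp (c * t) : ℂ) * (t:ℂ) ^ (s - 1))
      (Set.Ioi 0) := by
  refine Integrable.mono' (((aux_integrable hs (half_pos hc)).const_mul
    (∫ u in Set.Ioi (0:ℝ), u ^ (ν - 1) * Real.exp (-(4⁻¹ * u))))) (Fb_aesm hν hc) ?_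
  filter_upwards [ae_restrict_mem measurableSet_Ioi] with t ht
  exact Fb_norm_le hν hc ht

lemma Fb_norm_integral_le (hν : 0 < ν) (hc : 0 < c) (hs : 0 < s.re) :
    ∫ t in Set.Ioi (0:ℝ), ‖(Ginc ν (2 * (c * t)) : ℂ) * (Real.exp (c * t) : ℂ) * (t:ℂ) ^ (s - 1)‖
      ≤ (∫ u in Set.Ioi (0:ℝ), u ^ (ν - 1) * Real.exp (-(4⁻¹ * u))) *
          ((1/(c/2)) ^ s.re * Real.Gamma s.re) := by
  have hmaj : IntegrableOn (fun t : ℝ =>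
      (∫ u in Set.Ioi (0:ℝ), u ^ (ν - 1) * Real.exp (-(4⁻¹ * u))) *
        (t ^ (s.re - 1) * Real.exp (-(c/2 * t)))) (Set.Ioi 0) :=
    (aux_integrable hs (half_pos hc)).const_mul _
  have h1 : ∫ t in Set.Ioi (0:ℝ),
        ‖(Ginc ν (2 * (c * t)) : ℂ) * (Real.exp (c * t) : ℂ) * (t:ℂ) ^ (s - 1)‖
      ≤ ∫ t in Set.Ioi (0:ℝ),
        (∫ u in Set.Ioi (0:ℝ), u ^ (ν - 1) * Real.exp (-(4⁻¹ * u))) *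
          (t ^ (s.re - 1) * Real.exp (-(c/2 * t))) := by
    refine setIntegral_mono_on ((Fb_integrable hν hc hs).norm) hmaj measurableSet_Ioi
      (fun t ht => Fb_norm_le hν hc ht)
  rw [integral_const_mul] at h1
  refine h1.trans (le_of_eq ?_)
  congr 1
  rw [← Real.integral_rpow_mul_exp_neg_mul_Ioi hs (half_pos hc)]

end Fb

/-- Mellin transform of
`f(t) = Σ a(n) e^(-2πnt/√N) + Σ b(n) e^(2πnt/√N) Γ(1-k, 4πnt/√N)`:
for `Re s > μ + 1`,
`∫₀^∞ f(t) t^(s-1) dt = (√N/2π)^s (Γ(s) Σ a(n) n^(-s) + W_(1-k)(s) Σ b(n) n^(-s))`. -/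
theorem mellin_transform_of_expansion (k μ : ℝ) (N : ℕ) (hN : 0 < N)
    (hk2 : ∃ m : ℤ, k = m / 2) (hk : k < 1) (hμ : 0 ≤ μ)
    (a b : ℕ → ℂ)
    (ha : (fun n : ℕ => a n) =O[atTop] fun n : ℕ => (n:ℝ) ^ μ)
    (hb : (fun n : ℕ => b n) =O[atTop] fun n : ℕ => (n:ℝ) ^ μ)
    (f : ℝ → ℂ)
    (hf : ∀ t : ℝ, 0 < t →
      f t = (∑' n : ℕ, a (n+1) * (Real.exp (-(2 * π * ((n:ℝ)+1) * t / Real.sqrt N)) : ℂ))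
        + ∑' n : ℕ, b (n+1) * (Real.exp (2 * π * ((n:ℝ)+1) * t / Real.sqrt N) : ℂ)
            * (Ginc (1 - k) (4 * π * ((n:ℝ)+1) * t / Real.sqrt N) : ℂ))
    (s : ℂ) (hs : μ + 1 < s.re) :
    (∫ t in Set.Ioi (0:ℝ), f t * (t:ℂ) ^ (s - 1))
      = ((Real.sqrt N / (2 * π) : ℝ) : ℂ) ^ s *
          (Complex.Gamma s * (∑' n : ℕ, a (n+1) / (((n:ℝ) + 1 : ℝ) : ℂ) ^ s)
            + W (1 - k) s * (∑' n : ℕ, b (n+1) / (((n:ℝ) + 1 : ℝ) : ℂ) ^ s)) := by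
  have hπ : 0 < π := Real.pi_pos
  have hsN : 0 < Real.sqrt N := Real.sqrt_pos.mpr (by exact_mod_cast hN)
  have hν : 0 < 1 - k := by linarith
  have hσ0 : 0 < s.re := by linarith
  have hμσ : μ - s.re < -1 := by linarith
  obtain ⟨Ca, hCa0, hCa⟩ := coeff_bound hμ ha
  obtain ⟨Cb, hCb0, hCb⟩ := coeff_bound hμ hb
  set ν : ℝ := 1 - k with hνdef
  set q : ℝ := Real.sqrt N / (2 * π) with hqdef
  have hq : 0 < q := by rw [hqdef]; positivity
  set c : ℕ → ℝ := fun n => 2 * π * ((n:ℝ)+1) / Real.sqrt N with hcdef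
  have hc : ∀ n, 0 < c n := by
    intro n
    simp only [hcdef]
    positivity
  set K : ℝ := ∫ u in Set.Ioi (0:ℝ), u ^ (ν - 1) * Real.exp (-(4⁻¹ * u)) with hKdef
  have hK0 : 0 ≤ K := by
    rw [hKdef]
    refine setIntegral_nonneg measurableSet_Ioi (fun u hu => ?_)
    have : (0:ℝ) < u := hu
    positivity
  set Fa : ℕ → ℝ → ℂ := fun n t =>
    a (n+1) * ((Real.exp (-(c n * t)) : ℂ) * (t:ℂ) ^ (s - 1)) with hFadef
  set Fb : ℕ → ℝ → ℂ := fun n t =>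
    b (n+1) * ((Ginc ν (2 * (c n * t)) : ℂ) * (Real.exp (c n * t) : ℂ) * (t:ℂ) ^ (s - 1))
    with hFbdef
  -- integrability of each term
  have hFaInt : ∀ n, Integrable (Fa n) (volume.restrict (Set.Ioi 0)) := fun n =>
    (Fa_integrable (hc n) hσ0).const_mul _
  have hFbInt : ∀ n, Integrable (Fb n) (volume.restrict (Set.Ioi 0)) := fun n =>
    (Fb_integrable hν (hc n) hσ0).const_mul _
  have hGInt : ∀ n, Integrable (fun t => Fa n t + Fb n t) (volume.restrict (Set.Ioi 0)) :=
    fun n => (hFaInt n).add (hFbInt n)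
  -- algebraic identities for 1/c n
  have hc_inv : ∀ n, (1 / c n : ℝ) = q * (1/((n:ℝ)+1)) := by
    intro n
    simp only [hcdef, hqdef]
    have h1 : ((n:ℝ)+1) ≠ 0 := by positivity
    field_simp
  have hc2_inv : ∀ n, (1 / (c n / 2) : ℝ) = (2*q) * (1/((n:ℝ)+1)) := by
    intro n
    simp only [hcdef, hqdef]
    have h1 : ((n:ℝ)+1) ≠ 0 := by positivity
    field_simp
  have hrpow : ∀ (x : ℝ), 0 < x → ∀ n : ℕ,
      (x * (1/((n:ℝ)+1))) ^ s.re = x ^ s.re * ((n:ℝ)+1) ^ (-s.re) := by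
    intro x hx n
    rw [Real.mul_rpow hx.le (by positivity), one_div,
      Real.inv_rpow (by positivity), ← Real.rpow_neg (by positivity)]
  -- norm-integral bounds
  set Ba : ℕ → ℝ := fun n => (Ca * (q ^ s.re * Real.Gamma s.re)) * ((n:ℝ)+1) ^ (μ - s.re)
    with hBadef
  set Bb : ℕ → ℝ := fun n =>
    (Cb * (K * ((2*q) ^ s.re * Real.Gamma s.re))) * ((n:ℝ)+1) ^ (μ - s.re) with hBbdef
  have hBa_sum : Summable Ba := (aux_summable_rpow hμσ).mul_left _
  have hBb_sum : Summable Bb := (aux_summable_rpow hμσ).mul_left _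
  have hIa_le : ∀ n, (∫ t in Set.Ioi (0:ℝ), ‖Fa n t‖) ≤ Ba n := by
    intro n
    have hsplit : (∫ t in Set.Ioi (0:ℝ), ‖Fa n t‖)
        = ‖a (n+1)‖ * ∫ t in Set.Ioi (0:ℝ), ‖(Real.exp (-(c n * t)) : ℂ) * (t:ℂ) ^ (s - 1)‖ := by
      rw [← integral_const_mul]
      refine setIntegral_congr_fun measurableSet_Ioi (fun t ht => ?_)
      simp only [hFadef]
      rw [norm_mul]
    rw [hsplit, Fa_norm_integral (hc n) hσ0]
    have hcn := hc n
    have hΓ : 0 < Real.Gamma s.re := Real.Gamma_pos_of_pos hσ0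
    calc ‖a (n+1)‖ * ((1/(c n)) ^ s.re * Real.Gamma s.re)
        ≤ (Ca * ((n:ℝ)+1) ^ μ) * ((1/(c n)) ^ s.re * Real.Gamma s.re) := by
          refine mul_le_mul_of_nonneg_right (hCa n) (by positivity)
      _ = Ba n := by
          simp only [hBadef]
          rw [hc_inv n, hrpow q hq n, show μ - s.re = μ + (-s.re) from by ring,
            Real.rpow_add (by positivity : (0:ℝ) < (n:ℝ)+1)]
          ring
  have hIb_le : ∀ n, (∫ t in Set.Ioi (0:ℝ), ‖Fb n t‖) ≤ Bb n := by
    intro n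
    have hsplit : (∫ t in Set.Ioi (0:ℝ), ‖Fb n t‖)
        = ‖b (n+1)‖ * ∫ t in Set.Ioi (0:ℝ),
            ‖(Ginc ν (2 * (c n * t)) : ℂ) * (Real.exp (c n * t) : ℂ) * (t:ℂ) ^ (s - 1)‖ := by
      rw [← integral_const_mul]
      refine setIntegral_congr_fun measurableSet_Ioi (fun t ht => ?_)
      simp only [hFbdef]
      rw [norm_mul]
    rw [hsplit]
    have hcn := hc n
    have hΓ : 0 < Real.Gamma s.re := Real.Gamma_pos_of_pos hσ0
    have h2 := Fb_norm_integral_le hν (hc n) hσ0 (s := s)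
    rw [← hKdef] at h2
    calc ‖b (n+1)‖ * ∫ t in Set.Ioi (0:ℝ),
            ‖(Ginc ν (2 * (c n * t)) : ℂ) * (Real.exp (c n * t) : ℂ) * (t:ℂ) ^ (s - 1)‖
        ≤ ‖b (n+1)‖ * (K * ((1/(c n/2)) ^ s.re * Real.Gamma s.re)) :=
          mul_le_mul_of_nonneg_left h2 (norm_nonneg _)
      _ ≤ (Cb * ((n:ℝ)+1) ^ μ) * (K * ((1/(c n/2)) ^ s.re * Real.Gamma s.re)) := by
          refine mul_le_mul_of_nonneg_right (hCb n) ?_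
          have h3 : 0 ≤ (1/(c n/2)) ^ s.re := Real.rpow_nonneg (by positivity) _
          positivity
      _ = Bb n := by
          simp only [hBbdef]
          rw [hc2_inv n, hrpow (2*q) (by positivity) n, show μ - s.re = μ + (-s.re) from by ring,
            Real.rpow_add (by positivity : (0:ℝ) < (n:ℝ)+1)]
          ring
  have hG_norm_le : ∀ n, (∫ t in Set.Ioi (0:ℝ), ‖Fa n t + Fb n t‖) ≤ Ba n + Bb n := by
    intro n
    calc (∫ t in Set.Ioi (0:ℝ), ‖Fa n t + Fb n t‖)
        ≤ ∫ t in Set.Ioi (0:ℝ), (‖Fa n t‖ + ‖Fb n t‖) :=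
          integral_mono (hGInt n).norm ((hFaInt n).norm.add (hFbInt n).norm)
            (fun t => norm_add_le _ _)
      _ = (∫ t in Set.Ioi (0:ℝ), ‖Fa n t‖) + ∫ t in Set.Ioi (0:ℝ), ‖Fb n t‖ :=
          integral_add (hFaInt n).norm (hFbInt n).norm
      _ ≤ Ba n + Bb n := add_le_add (hIa_le n) (hIb_le n)
  have hG_sum : Summable (fun n => ∫ t in Set.Ioi (0:ℝ), ‖Fa n t + Fb n t‖) :=
    Summable.of_nonneg_of_le (fun n => integral_nonneg fun t => norm_nonneg _)
      hG_norm_le (hBa_sum.add hBb_sum)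
  -- Step 1: rewrite the integrand as a single tsum
  have hstep1 : (∫ t in Set.Ioi (0:ℝ), f t * (t:ℂ) ^ (s - 1))
      = ∫ t in Set.Ioi (0:ℝ), ∑' n, (Fa n t + Fb n t) := by
    refine setIntegral_congr_fun measurableSet_Ioi (fun t ht => ?_)
    have ht : (0:ℝ) < t := ht
    rw [hf t ht, add_mul]
    have harg1 : ∀ n : ℕ, -(2 * π * ((n:ℝ)+1) * t / Real.sqrt N) = -(c n * t) := by
      intro n; simp only [hcdef]; ring
    have harg2 : ∀ n : ℕ, 2 * π * ((n:ℝ)+1) * t / Real.sqrt N = c n * t := by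
      intro n; simp only [hcdef]; ring
    have harg3 : ∀ n : ℕ, 4 * π * ((n:ℝ)+1) * t / Real.sqrt N = 2 * (c n * t) := by
      intro n; simp only [hcdef]; ring
    simp only [harg1, harg2, harg3]
    have hr1 : (0:ℝ) ≤ Real.exp (-(2*π*t/Real.sqrt N)) := Real.exp_nonneg _
    have hr1' : Real.exp (-(2*π*t/Real.sqrt N)) < 1 := by
      rw [Real.exp_lt_one_iff]
      have : (0:ℝ) < 2*π*t/Real.sqrt N := by positivity
      linarith
    have hr2 : (0:ℝ) ≤ Real.exp (-(π*t/Real.sqrt N)) := Real.exp_nonneg _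
    have hr2' : Real.exp (-(π*t/Real.sqrt N)) < 1 := by
      rw [Real.exp_lt_one_iff]
      have : (0:ℝ) < π*t/Real.sqrt N := by positivity
      linarith
    have hexp1 : ∀ n : ℕ, Real.exp (-(c n * t)) = (Real.exp (-(2*π*t/Real.sqrt N)))^(n+1) := by
      intro n
      rw [← Real.exp_nat_mul]
      congr 1
      simp only [hcdef]
      push_cast
      ring
    have hexp2 : ∀ n : ℕ, Real.exp (-(c n * t / 2)) = (Real.exp (-(π*t/Real.sqrt N)))^(n+1) := by
      intro n
      rw [← Real.exp_nat_mul]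
      congr 1
      simp only [hcdef]
      push_cast
      ring
    have hA : Summable (fun n : ℕ => a (n+1) * (Real.exp (-(c n * t)) : ℂ) * (t:ℂ) ^ (s-1)) := by
      refine Summable.of_norm_bounded
        (g := fun n => (Ca * ‖(t:ℂ)^(s-1)‖) * (((n:ℝ)+1)^μ * (Real.exp (-(2*π*t/Real.sqrt N)))^(n+1)))
        (((aux_summable_geom hμ hr1 hr1')).mul_left _) (fun n => ?_)
      rw [norm_mul, norm_mul, Complex.norm_real, Real.norm_eq_abs, Real.abs_exp, hexp1 n]
      have h1 : ‖a (n+1)‖ ≤ Ca * ((n:ℝ)+1)^μ := hCa n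
      have h2 : (0:ℝ) ≤ (Real.exp (-(2*π*t/Real.sqrt N)))^(n+1) := by positivity
      have h3 : (0:ℝ) ≤ ‖(t:ℂ)^(s-1)‖ := norm_nonneg _
      calc ‖a (n+1)‖ * (Real.exp (-(2*π*t/Real.sqrt N)))^(n+1) * ‖(t:ℂ)^(s-1)‖
          ≤ (Ca * ((n:ℝ)+1)^μ) * (Real.exp (-(2*π*t/Real.sqrt N)))^(n+1) * ‖(t:ℂ)^(s-1)‖ := by
            refine mul_le_mul_of_nonneg_right (mul_le_mul_of_nonneg_right h1 h2) h3
        _ = (Ca * ‖(t:ℂ)^(s-1)‖) * (((n:ℝ)+1)^μ * (Real.exp (-(2*π*t/Real.sqrt N)))^(n+1)) := by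
            ring
    have hB : Summable (fun n : ℕ => b (n+1) * (Real.exp (c n * t) : ℂ) *
        (Ginc ν (2 * (c n * t)) : ℂ) * (t:ℂ) ^ (s-1)) := by
      refine Summable.of_norm_bounded
        (g := fun n => (Cb * K * ‖(t:ℂ)^(s-1)‖) *
          (((n:ℝ)+1)^μ * (Real.exp (-(π*t/Real.sqrt N)))^(n+1)))
        (((aux_summable_geom hμ hr2 hr2')).mul_left _) (fun n => ?_)
      have h2ct : (0:ℝ) ≤ 2 * (c n * t) := by
        have := hc n
        positivity
      simp only [norm_mul, Complex.norm_real, Real.norm_eq_abs]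
      rw [Real.abs_exp, abs_of_nonneg (Ginc_nonneg h2ct)]
      have hGle := Ginc_le hν h2ct
      rw [← hKdef] at hGle
      have hprod : Real.exp (c n * t) * Ginc ν (2 * (c n * t))
          ≤ K * (Real.exp (-(π*t/Real.sqrt N)))^(n+1) := by
        calc Real.exp (c n * t) * Ginc ν (2 * (c n * t))
            ≤ Real.exp (c n * t) * (Real.exp (-(3/4 * (2 * (c n * t)))) * K) :=
              mul_le_mul_of_nonneg_left hGle (Real.exp_nonneg _)
          _ = K * Real.exp (-(c n * t / 2)) := by
              rw [← mul_assoc, ← Real.exp_add]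
              rw [show c n * t + -(3/4 * (2 * (c n * t))) = -(c n * t / 2) from by ring]
              ring
          _ = K * (Real.exp (-(π*t/Real.sqrt N)))^(n+1) := by rw [hexp2 n]
      have h1 : ‖b (n+1)‖ ≤ Cb * ((n:ℝ)+1)^μ := hCb n
      have h3 : (0:ℝ) ≤ ‖(t:ℂ)^(s-1)‖ := norm_nonneg _
      have h4 : (0:ℝ) ≤ Real.exp (c n * t) * Ginc ν (2 * (c n * t)) :=
        mul_nonneg (Real.exp_nonneg _) (Ginc_nonneg h2ct)
      calc ‖b (n+1)‖ * Real.exp (c n * t) * Ginc ν (2 * (c n * t)) * ‖(t:ℂ)^(s-1)‖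
          = ‖b (n+1)‖ * (Real.exp (c n * t) * Ginc ν (2 * (c n * t))) * ‖(t:ℂ)^(s-1)‖ := by ring
        _ ≤ (Cb * ((n:ℝ)+1)^μ) * (K * (Real.exp (-(π*t/Real.sqrt N)))^(n+1)) * ‖(t:ℂ)^(s-1)‖ := by
            refine mul_le_mul_of_nonneg_right (mul_le_mul h1 hprod h4 (by positivity)) h3
        _ = (Cb * K * ‖(t:ℂ)^(s-1)‖) *
            (((n:ℝ)+1)^μ * (Real.exp (-(π*t/Real.sqrt N)))^(n+1)) := by ring
    rw [← tsum_mul_right, ← tsum_mul_right, ← Summable.tsum_add hA hB]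
    refine tsum_congr (fun n => ?_)
    simp only [hFadef, hFbdef]
    ring
  -- Step 2: swap sum and integral
  rw [hstep1, ← integral_tsum_of_summable_integral_norm hGInt hG_sum]
  -- Step 3: evaluate each integral
  have harg : ∀ n : ℕ, (((n:ℝ)+1 : ℝ) : ℂ).arg ≠ π := by
    intro n
    rw [Complex.arg_ofReal_of_nonneg (by positivity)]
    exact Real.pi_ne_zero.symm
  have hcpow : ∀ n : ℕ, ((1 / c n : ℝ) : ℂ) ^ s
      = ((q : ℝ) : ℂ) ^ s * ((((n:ℝ)+1 : ℝ) : ℂ) ^ s)⁻¹ := by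
    intro n
    rw [hc_inv n, Complex.ofReal_mul, Complex.mul_cpow_ofReal_nonneg hq.le (by positivity),
      show ((1/((n:ℝ)+1) : ℝ) : ℂ) = ((((n:ℝ)+1 : ℝ) : ℂ))⁻¹ by push_cast; ring,
      Complex.inv_cpow _ _ (harg n)]
  have hIaval : ∀ n, (∫ t in Set.Ioi (0:ℝ), Fa n t)
      = ((q : ℝ) : ℂ) ^ s * Complex.Gamma s * (a (n+1) / (((n:ℝ)+1 : ℝ) : ℂ) ^ s) := by
    intro n
    simp only [hFadef]
    rw [integral_const_mul, mellin_exp (hc n) hσ0, hcpow n, div_eq_mul_inv]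
    ring
  have hIbval : ∀ n, (∫ t in Set.Ioi (0:ℝ), Fb n t)
      = ((q : ℝ) : ℂ) ^ s * W ν s * (b (n+1) / (((n:ℝ)+1 : ℝ) : ℂ) ^ s) := by
    intro n
    simp only [hFbdef]
    rw [integral_const_mul, mellin_Ginc (hc n), hcpow n, div_eq_mul_inv]
    ring
  have hval : ∀ n, (∫ t in Set.Ioi (0:ℝ), (Fa n t + Fb n t))
      = ((q : ℝ) : ℂ) ^ s * Complex.Gamma s * (a (n+1) / (((n:ℝ)+1 : ℝ) : ℂ) ^ s)
        + ((q : ℝ) : ℂ) ^ s * W ν s * (b (n+1) / (((n:ℝ)+1 : ℝ) : ℂ) ^ s) := by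
    intro n
    rw [integral_add (hFaInt n) (hFbInt n), hIaval n, hIbval n]
  -- summability of the coefficient series
  have hnp : ∀ n : ℕ, ‖(((n:ℝ)+1 : ℝ) : ℂ) ^ s‖ = ((n:ℝ)+1) ^ s.re := by
    intro n
    rw [Complex.norm_cpow_eq_rpow_re_of_pos (by positivity)]
  have hdiv_sum : ∀ (u : ℕ → ℂ) (Cu : ℝ), (∀ n : ℕ, ‖u (n+1)‖ ≤ Cu * ((n:ℝ)+1) ^ μ) →
      Summable (fun n : ℕ => u (n+1) / (((n:ℝ)+1 : ℝ) : ℂ) ^ s) := by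
    intro u Cu hCu
    refine Summable.of_norm_bounded (g := fun n => Cu * ((n:ℝ)+1) ^ (μ - s.re))
      ((aux_summable_rpow hμσ).mul_left _) (fun n => ?_)
    rw [norm_div, hnp n]
    have hpos : (0:ℝ) < ((n:ℝ)+1) ^ s.re := Real.rpow_pos_of_pos (by positivity) _
    rw [div_le_iff₀ hpos]
    calc ‖u (n+1)‖ ≤ Cu * ((n:ℝ)+1) ^ μ := hCu n
      _ = Cu * ((n:ℝ)+1) ^ (μ - s.re) * ((n:ℝ)+1) ^ s.re := by
          rw [mul_assoc, ← Real.rpow_add (by positivity)]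
          ring_nf
  have hsa : Summable (fun n : ℕ => a (n+1) / (((n:ℝ)+1 : ℝ) : ℂ) ^ s) := hdiv_sum a Ca hCa
  have hsb : Summable (fun n : ℕ => b (n+1) / (((n:ℝ)+1 : ℝ) : ℂ) ^ s) := hdiv_sum b Cb hCb
  rw [show (∑' n, ∫ t in Set.Ioi (0:ℝ), (Fa n t + Fb n t))
      = ∑' n, (((q : ℝ) : ℂ) ^ s * Complex.Gamma s * (a (n+1) / (((n:ℝ)+1 : ℝ) : ℂ) ^ s)
        + ((q : ℝ) : ℂ) ^ s * W ν s * (b (n+1) / (((n:ℝ)+1 : ℝ) : ℂ) ^ s)) from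
    tsum_congr hval]
  rw [Summable.tsum_add ((hsa.mul_left _)) ((hsb.mul_left _)), tsum_mul_left, tsum_mul_left]
  ring
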